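/- Let m = p m' and n be integers with p prime, p not dividing n, |n| > 1, and |m'| > 1. Then BS(m,n) is not Hopfian: there exists a surjective but non-injective group endomorphism of BS(m,n) = ⟨a,t | t a^{pm'} t⁻¹ = a^n⟩. -/

import Mathlib

/-- The single defining relation `t a^m t⁻¹ a^{-n}` of the Baumslag-Solitar group
`BS(m,n)`, as a subset of the free group on `Bool` (with `false ↦ a`, `true ↦ t`). -/
abbrev bsRels (m n : ℤ) : Set (FreeGroup Bool) :=
  {FreeGroup.of true * (FreeGroup.of false) ^ m * (FreeGroup.of true)⁻¹ *
    ((FreeGroup.of false) ^ n)⁻¹}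

/-- The Baumslag-Solitar group `BS(m,n) = ⟨a, t ∣ t a^m t⁻¹ = a^n⟩`. -/
abbrev BS (m n : ℤ) := PresentedGroup (bsRels m n)

/-- The generator `a` of `BS(m,n)`. -/
def BS.a (m n : ℤ) : BS m n := PresentedGroup.of false

/-- The generator `t` of `BS(m,n)`. -/
def BS.t (m n : ℤ) : BS m n := PresentedGroup.of true

/-- The Klein bottle group `K = ⟨u, v ∣ u² = v²⟩` (`true ↦ u`, `false ↦ v`). -/
abbrev KB := PresentedGroup
  ({FreeGroup.of true ^ 2 * (FreeGroup.of false ^ 2)⁻¹} : Set (FreeGroup Bool))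

/-- The generator `u` of the Klein bottle group. -/
def KB.u : KB := PresentedGroup.of true

/-- The generator `v` of the Klein bottle group. -/
def KB.v : KB := PresentedGroup.of false

open Multiplicative Subgroup


def bsA (m : ℤ) : Subgroup (Multiplicative ℤ) := Subgroup.zpowers (Multiplicative.ofAdd m)

lemma ofAdd_pow_int (m k : ℤ) : (Multiplicative.ofAdd m) ^ k = Multiplicative.ofAdd (k * m) := by
  rw [← ofAdd_zsmul, smul_eq_mul]

lemma mem_bsA {m : ℤ} {x : Multiplicative ℤ} : x ∈ bsA m ↔ m ∣ x.toAdd := by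
  constructor
  · rintro ⟨k, rfl⟩
    show m ∣ toAdd (ofAdd m ^ k)
    rw [ofAdd_pow_int, toAdd_ofAdd]
    exact Dvd.intro_left _ rfl
  · rintro ⟨k, hk⟩
    exact ⟨k, show ofAdd m ^ k = x by rw [ofAdd_pow_int, mul_comm, ← hk, ofAdd_toAdd]⟩

def bsφ (m n : ℤ) (hm : m ≠ 0) (hn : n ≠ 0) : bsA m ≃* bsA n where
  toFun x := ⟨Multiplicative.ofAdd (Multiplicative.toAdd x.1 / m * n), mem_bsA.2 (Dvd.intro_left _ rfl)⟩
  invFun y := ⟨Multiplicative.ofAdd (Multiplicative.toAdd y.1 / n * m), mem_bsA.2 (Dvd.intro_left _ rfl)⟩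
  left_inv x := by
    obtain ⟨x, hx⟩ := x
    apply Subtype.ext
    simp only [toAdd_ofAdd, Int.mul_ediv_cancel _ hn]
    rw [Int.ediv_mul_cancel (mem_bsA.1 hx), ofAdd_toAdd]
  right_inv y := by
    obtain ⟨y, hy⟩ := y
    apply Subtype.ext
    simp only [toAdd_ofAdd, Int.mul_ediv_cancel _ hm]
    rw [Int.ediv_mul_cancel (mem_bsA.1 hy), ofAdd_toAdd]
  map_mul' x y := by
    apply Subtype.ext
    simp only [Subgroup.coe_mul, toAdd_mul]
    rw [Int.add_ediv_of_dvd_left (mem_bsA.1 x.2), add_mul, ofAdd_add]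

lemma bsφ_apply (m n : ℤ) (hm : m ≠ 0) (hn : n ≠ 0) :
    (bsφ m n hm hn ⟨Multiplicative.ofAdd m, mem_bsA.2 dvd_rfl⟩ : Multiplicative ℤ)
      = Multiplicative.ofAdd n := by
  show Multiplicative.ofAdd (m / m * n) = Multiplicative.ofAdd n
  rw [Int.ediv_self hm, one_mul]

open HNNExtension in
lemma bs_key (m n : ℤ) :
    BS.t m n * (BS.a m n) ^ m * (BS.t m n)⁻¹ = (BS.a m n) ^ n := by
  have h : PresentedGroup.mk (bsRels m n)
      (FreeGroup.of true * (FreeGroup.of false) ^ m * (FreeGroup.of true)⁻¹ *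
        ((FreeGroup.of false) ^ n)⁻¹) = 1 := by
    apply (QuotientGroup.eq_one_iff _).2
    exact Subgroup.subset_normalClosure rfl
  rw [map_mul, map_mul, map_mul, map_inv, map_inv, map_zpow, map_zpow] at h
  have ht : PresentedGroup.mk (bsRels m n) (FreeGroup.of true) = BS.t m n := rfl
  have ha : PresentedGroup.mk (bsRels m n) (FreeGroup.of false) = BS.a m n := rfl
  rw [ht, ha] at h
  rw [← mul_right_cancel_iff (a := ((BS.a m n) ^ n)⁻¹), mul_inv_cancel, h]

lemma bs_key_pow (m n k : ℤ) :
    BS.t m n * (BS.a m n) ^ (m * k) * (BS.t m n)⁻¹ = (BS.a m n) ^ (n * k) := by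
  rw [zpow_mul, zpow_mul, ← bs_key m n, conj_zpow]

open HNNExtension

abbrev bsH (m n : ℤ) (hm : m ≠ 0) (hn : n ≠ 0) :=
  HNNExtension (Multiplicative ℤ) (bsA m) (bsA n) (bsφ m n hm hn)

lemma of_g0_zpow (m n : ℤ) (hm : m ≠ 0) (hn : n ≠ 0) (k : ℤ) :
    (of (Multiplicative.ofAdd (1:ℤ)) : bsH m n hm hn) ^ k = of (Multiplicative.ofAdd k) := by
  rw [← map_zpow HNNExtension.of, ofAdd_pow_int, mul_one]

lemma bsH_key (m n : ℤ) (hm : m ≠ 0) (hn : n ≠ 0) :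
    (t : bsH m n hm hn) * of (Multiplicative.ofAdd m) * t⁻¹ = of (Multiplicative.ofAdd n) := by
  have h := equiv_eq_conj (φ := bsφ m n hm hn) ⟨Multiplicative.ofAdd m, mem_bsA.2 dvd_rfl⟩
  rw [bsφ_apply] at h
  exact h.symm

def bsχ (m n : ℤ) (hm : m ≠ 0) (hn : n ≠ 0) : BS m n →* bsH m n hm hn :=
  PresentedGroup.toGroup (f := fun b => if b then t else of (Multiplicative.ofAdd (1:ℤ)))
    (by
      rintro r rfl
      simp only [map_mul, map_inv, map_zpow, FreeGroup.lift_apply_of]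
      rw [if_neg (by decide : ¬ (false = true)), if_pos trivial, of_g0_zpow, of_g0_zpow,
        bsH_key, mul_inv_cancel])

lemma bsχ_a (m n : ℤ) (hm : m ≠ 0) (hn : n ≠ 0) :
    bsχ m n hm hn (BS.a m n) = of (Multiplicative.ofAdd (1:ℤ)) := by
  exact PresentedGroup.toGroup.of _

lemma bsχ_t (m n : ℤ) (hm : m ≠ 0) (hn : n ≠ 0) :
    bsχ m n hm hn (BS.t m n) = t := by
  exact PresentedGroup.toGroup.of _

lemma bsH_word_ne_one (m n m' : ℤ) (hm : m ≠ 0) (hn : n ≠ 0)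
    (h1 : ¬ m ∣ m') (h2 : ¬ n ∣ 1) :
    (t * of (Multiplicative.ofAdd m') * t⁻¹) * of (Multiplicative.ofAdd (1:ℤ)) *
      (t * of (Multiplicative.ofAdd m') * t⁻¹)⁻¹ * (of (Multiplicative.ofAdd (1:ℤ)))⁻¹
      ≠ (1 : bsH m n hm hn) := by
  intro hcontra
  set φ := bsφ m n hm hn
  have h1' : ¬ m ∣ (-m') := fun h => h1 (dvd_neg.1 h)
  let w : HNNExtension.NormalWord.ReducedWord (Multiplicative ℤ) (bsA m) (bsA n) :=
    { head := 1
      toList := [((1 : ℤˣ), Multiplicative.ofAdd m'), ((-1 : ℤˣ), Multiplicative.ofAdd (1:ℤ)),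
        ((1 : ℤˣ), Multiplicative.ofAdd (-m')), ((-1 : ℤˣ), Multiplicative.ofAdd (-1:ℤ))]
      chain := by
        refine List.isChain_cons_cons.2 ⟨?_, List.isChain_cons_cons.2 ⟨?_, List.isChain_cons_cons.2 ⟨?_,
          List.isChain_singleton _⟩⟩⟩
        · intro h
          exact absurd (mem_bsA.1 h) (by simpa using h1)
        · intro h
          exact absurd (mem_bsA.1 h) (by simpa using h2)
        · intro h
          exact absurd (mem_bsA.1 h) (by simpa using h1') }
  have hprod : w.prod φ =
      (t * of (Multiplicative.ofAdd m') * t⁻¹) * of (Multiplicative.ofAdd (1:ℤ)) *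
      (t * of (Multiplicative.ofAdd m') * t⁻¹)⁻¹ * (of (Multiplicative.ofAdd (1:ℤ)))⁻¹ := by
    show of (1 : Multiplicative ℤ) * _ = _
    simp only [w, List.map_cons, List.map_nil, List.prod_cons, List.prod_nil, Units.val_neg,
      Units.val_one, zpow_one, zpow_neg, map_one, one_mul, mul_one]
    rw [ofAdd_neg, ofAdd_neg, map_inv, map_inv]
    group
  have hmem : w.prod φ ∈ (of.range : Subgroup (bsH m n hm hn)) := by
    rw [hprod, hcontra]
    exact one_mem _
  have := HNNExtension.ReducedWord.toList_eq_nil_of_mem_of_range φ w hmem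
  simp [w] at this

theorem stmt11 (p m' n : ℤ) (hp : Prime p) (hpn : ¬p ∣ n) (hn : 1 < |n|) (hm' : 1 < |m'|) :
    ∃ f : BS (p * m') n →* BS (p * m') n,
      Function.Surjective f ∧ ¬Function.Injective f := by
  have hp' : p.natAbs.Prime := Int.prime_iff_natAbs_prime.mp hp
  have hm'0 : m' ≠ 0 := by rintro rfl; simp at hm'
  have hn0 : n ≠ 0 := by rintro rfl; simp at hn
  have hm0 : p * m' ≠ 0 := mul_ne_zero hp.ne_zero hm'0
  have h1 : ¬ (p * m') ∣ m' := by
    intro h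
    have h' := Int.natAbs_dvd_natAbs.2 h
    rw [Int.natAbs_mul] at h'
    have hle := Nat.le_of_dvd (Int.natAbs_pos.2 hm'0) h'
    have h2m : 2 * m'.natAbs ≤ p.natAbs * m'.natAbs :=
      Nat.mul_le_mul_right _ hp'.two_le
    have := Int.natAbs_pos.2 hm'0
    omega
  have h2 : ¬ n ∣ 1 := by
    intro h
    rcases Int.isUnit_iff.mp (isUnit_of_dvd_one h) with h | h <;> rw [h] at hn <;> simp at hn
  set T := BS.t (p * m') n with hT
  set A := BS.a (p * m') n with hA
  have hkey : T * A ^ (p * m') * T⁻¹ = A ^ n := bs_key (p * m') n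
  have hrel : ∀ r ∈ bsRels (p * m') n,
      FreeGroup.lift (fun b => if b then T else A ^ p) r = 1 := by
    rintro r rfl
    simp only [map_mul, map_inv, map_zpow, FreeGroup.lift_apply_of]
    rw [if_neg (by decide : ¬ (false = true)), if_pos trivial]
    rw [← zpow_mul, ← zpow_mul, mul_comm (p : ℤ) (p * m')]
    have hkp := bs_key_pow (p * m') n p
    rw [← hT, ← hA] at hkp
    rw [hkp, mul_comm (p : ℤ) n, mul_inv_cancel]
  set f := PresentedGroup.toGroup hrel with hfdef
  have hfa : f A = A ^ p := PresentedGroup.toGroup.of hrel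
  have hft : f T = T := PresentedGroup.toGroup.of hrel
  have hAn : f (T * A ^ m' * T⁻¹) = A ^ n := by
    rw [map_mul, map_mul, map_inv, map_zpow, hfa, hft, ← zpow_mul, hkey]
  refine ⟨f, ?_, ?_⟩
  · -- surjectivity
    rw [← MonoidHom.range_eq_top, eq_top_iff,
      ← PresentedGroup.closure_range_of (bsRels (p * m')  n), Subgroup.closure_le]
    rintro _ ⟨b, rfl⟩
    cases b
    · -- generator a
      obtain ⟨x, y, hxy⟩ := hp.coprime_iff_not_dvd.2 hpn
      have hAp : A ^ p ∈ f.range := ⟨A, hfa⟩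
      have hAn' : A ^ n ∈ f.range := ⟨_, hAn⟩
      have hAmem : A ∈ f.range := by
        have : A = (A ^ p) ^ x * (A ^ n) ^ y := by
          rw [← zpow_mul, ← zpow_mul, ← zpow_add, mul_comm (p : ℤ) x, mul_comm n y, hxy,
            zpow_one]
        rw [this]
        exact mul_mem (zpow_mem hAp x) (zpow_mem hAn' y)
      exact hAmem
    · exact ⟨T, hft⟩
  · -- non-injectivity
    intro hinj
    set c := (T * A ^ m' * T⁻¹) * A * (T * A ^ m' * T⁻¹)⁻¹ * A⁻¹ with hc
    have hfc : f c = 1 := by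
      rw [hc, map_mul, map_mul, map_mul, map_inv, map_inv, hAn, hfa]
      group
    have hc1 : c = 1 := hinj (by rw [hfc, map_one])
    have hχc : bsχ (p * m') n hm0 hn0 c = 1 := by rw [hc1, map_one]
    apply bsH_word_ne_one (p * m') n m' hm0 hn0 h1 h2
    rw [← hχc, hc]
    simp only [hT, hA, map_mul, map_inv, map_zpow, bsχ_a, bsχ_t, of_g0_zpow]
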